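/- Let n ≥ 2 and p be integers with 1 ≤ p ≤ n−1, let ℓ ∈ ℝ, and let I ⊆ ℝ be an open interval with 0 ∉ I, 1/2 ∉ I and 1 ∉ I. Suppose f, f̂ : I → ℝ are four times differentiable and satisfy, for all z ∈ I, the coupled system z(1−z)f''(z) + (n/2)(1−2z)f'(z) = [ ℓ + p(1/(2z(1−z)) + n−p−1) ]·f(z) − (p(1−2z)/(2z(1−z)))·f̂(z) and z(1−z)f̂''(z) + (n/2)(1−2z)f̂'(z) = [ ℓ + (n−p)(1/(2z(1−z)) + p−1) ]·f̂(z) − ((n−p)(1−2z)/(2z(1−z)))·f(z). Then f satisfies, for all z ∈ I, the fourth-order linear equation f''''(z) + Q₃(z)f'''(z) + Q₂(z)f''(z) + Q₁(z)f'(z) + Q₀(z)f(z) = 0, where Q₃(z) = (n+4)/(z−1) + (n+4)/z + 4/(1−2z); Q₂(z) = [ 16(n²+2(p+3)n−2p²+2(ℓ+3))z⁴ + 32(2p²−n²−2(p+3)n−2(ℓ+3))z³ + 8(3n²+5(p+3)n+3n−5p²+ℓ+4(ℓ+3)+6)z² + 8(p²−n²−(p+3)n−3n−ℓ−6)z + n²+6n+8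 ] / (16z⁶−48z⁵+52z⁴−24z³+4z²); Q₁(z) = [ 2pn²+n²−2p²n+4pn+2ℓn+2n−4p²+4ℓ + 4(−2pn²−n²+2p²n−2pn−2ℓn−2n+2p²+2p−2ℓ)z + 4(2pn²+n²−2p²n+2pn+2ℓn+2n−2p²−2p+2ℓ)z² ] / (4z⁵−10z⁴+8z³−2z²); Q₀(z) = [ p⁴−2np³+n²p²−2ℓp²+p²−2np+2nℓp−2p+ℓ²−2ℓ + 4(−p⁴+2np³−n²p²+2ℓp²+p²−2nℓp−ℓ²)z + 4(p⁴−2np³+n²p²−2ℓp²−p²+2nℓp+ℓ²)z² ] / (4z⁶−12z⁵+13z⁴−6z³+z²). -/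

import Mathlib

/-- Coefficient Q₃ of the fourth-order radial equation. -/
noncomputable def Q3 (n : ℝ) (z : ℝ) : ℝ :=
  (n + 4) / (z - 1) + (n + 4) / z + 4 / (1 - 2 * z)

/-- Coefficient Q₂ of the fourth-order radial equation. -/
noncomputable def Q2 (n p ℓ : ℝ) (z : ℝ) : ℝ :=
  (16 * (n ^ 2 + 2 * (p + 3) * n - 2 * p ^ 2 + 2 * (ℓ + 3)) * z ^ 4
    + 32 * (2 * p ^ 2 - n ^ 2 - 2 * (p + 3) * n - 2 * (ℓ + 3)) * z ^ 3
    + 8 * (3 * n ^ 2 + 5 * (p + 3) * n + 3 * n - 5 * p ^ 2 + ℓ + 4 * (ℓ + 3) + 6) * z ^ 2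
    + 8 * (p ^ 2 - n ^ 2 - (p + 3) * n - 3 * n - ℓ - 6) * z
    + n ^ 2 + 6 * n + 8) /
  (16 * z ^ 6 - 48 * z ^ 5 + 52 * z ^ 4 - 24 * z ^ 3 + 4 * z ^ 2)

/-- Coefficient Q₁ of the fourth-order radial equation. -/
noncomputable def Q1 (n p ℓ : ℝ) (z : ℝ) : ℝ :=
  (2 * p * n ^ 2 + n ^ 2 - 2 * p ^ 2 * n + 4 * p * n + 2 * ℓ * n + 2 * n - 4 * p ^ 2 + 4 * ℓ
    + 4 * (-(2 * p * n ^ 2) - n ^ 2 + 2 * p ^ 2 * n - 2 * p * n - 2 * ℓ * n - 2 * n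
        + 2 * p ^ 2 + 2 * p - 2 * ℓ) * z
    + 4 * (2 * p * n ^ 2 + n ^ 2 - 2 * p ^ 2 * n + 2 * p * n + 2 * ℓ * n + 2 * n
        - 2 * p ^ 2 - 2 * p + 2 * ℓ) * z ^ 2) /
  (4 * z ^ 5 - 10 * z ^ 4 + 8 * z ^ 3 - 2 * z ^ 2)

/-- Coefficient Q₀ of the fourth-order radial equation. -/
noncomputable def Q0 (n p ℓ : ℝ) (z : ℝ) : ℝ :=
  (p ^ 4 - 2 * n * p ^ 3 + n ^ 2 * p ^ 2 - 2 * ℓ * p ^ 2 + p ^ 2 - 2 * n * p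
      + 2 * n * ℓ * p - 2 * p + ℓ ^ 2 - 2 * ℓ
    + 4 * (-(p ^ 4) + 2 * n * p ^ 3 - n ^ 2 * p ^ 2 + 2 * ℓ * p ^ 2 + p ^ 2
        - 2 * n * ℓ * p - ℓ ^ 2) * z
    + 4 * (p ^ 4 - 2 * n * p ^ 3 + n ^ 2 * p ^ 2 - 2 * ℓ * p ^ 2 - p ^ 2
        + 2 * n * ℓ * p + ℓ ^ 2) * z ^ 2) /
  (4 * z ^ 6 - 12 * z ^ 5 + 13 * z ^ 4 - 6 * z ^ 3 + z ^ 2)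

lemma hdpoly (c0 c1 c2 c3 c4 x : ℝ) :
    HasDerivAt (fun w : ℝ => c0 + c1*w + c2*w^2 + c3*w^3 + c4*w^4)
      (c1 + 2*c2*x + 3*c3*x^2 + 4*c4*x^3) x := by
  have h : HasDerivAt (fun w : ℝ => c0 + c1*w + c2*w^2 + c3*w^3 + c4*w^4)
      (0 + c1*1 + c2*((2:ℕ)*x^1) + c3*((3:ℕ)*x^2) + c4*((4:ℕ)*x^3)) x :=
    ((((hasDerivAt_const x c0).add ((hasDerivAt_id' x).const_mul c1)).add
      ((hasDerivAt_pow 2 x).const_mul c2)).add ((hasDerivAt_pow 3 x).const_mul c3)).add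
      ((hasDerivAt_pow 4 x).const_mul c4)
  convert h using 1
  push_cast; ring

set_option maxHeartbeats 4000000 in
set_option maxRecDepth 16000 in
/-- eliminating f̂ from the coupled radial system for the Hodge Laplacian on
p-forms on a product space yields a fourth-order Fuchsian equation (a fourth-order analogue
of the Heun equation) with coefficients Q₀, Q₁, Q₂, Q₃. -/
theorem stmt_19 (n p : ℤ) (hn : 2 ≤ n) (hp : 1 ≤ p) (hpn : p ≤ n - 1) (ℓ : ℝ)
    (a b : ℝ) (h0 : (0 : ℝ) ∉ Set.Ioo a b) (hhalf : (1 / 2 : ℝ) ∉ Set.Ioo a b)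
    (h1 : (1 : ℝ) ∉ Set.Ioo a b)
    (f fh : ℝ → ℝ)
    (hf1 : ∀ z ∈ Set.Ioo a b, DifferentiableAt ℝ f z)
    (hf2 : ∀ z ∈ Set.Ioo a b, DifferentiableAt ℝ (deriv f) z)
    (hf3 : ∀ z ∈ Set.Ioo a b, DifferentiableAt ℝ (deriv (deriv f)) z)
    (hf4 : ∀ z ∈ Set.Ioo a b, DifferentiableAt ℝ (deriv (deriv (deriv f))) z)
    (hfh1 : ∀ z ∈ Set.Ioo a b, DifferentiableAt ℝ fh z)
    (hfh2 : ∀ z ∈ Set.Ioo a b, DifferentiableAt ℝ (deriv fh) z)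
    (hfh3 : ∀ z ∈ Set.Ioo a b, DifferentiableAt ℝ (deriv (deriv fh)) z)
    (hfh4 : ∀ z ∈ Set.Ioo a b, DifferentiableAt ℝ (deriv (deriv (deriv fh))) z)
    (heq1 : ∀ z ∈ Set.Ioo a b,
      z * (1 - z) * deriv (deriv f) z + ((n : ℝ) / 2) * (1 - 2 * z) * deriv f z
        = (ℓ + (p : ℝ) * (1 / (2 * z * (1 - z)) + (n : ℝ) - (p : ℝ) - 1)) * f z
          - ((p : ℝ) * (1 - 2 * z) / (2 * z * (1 - z))) * fh z)
    (heq2 : ∀ z ∈ Set.Ioo a b,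
      z * (1 - z) * deriv (deriv fh) z + ((n : ℝ) / 2) * (1 - 2 * z) * deriv fh z
        = (ℓ + ((n : ℝ) - (p : ℝ)) * (1 / (2 * z * (1 - z)) + (p : ℝ) - 1)) * fh z
          - (((n : ℝ) - (p : ℝ)) * (1 - 2 * z) / (2 * z * (1 - z))) * f z) :
    ∀ z ∈ Set.Ioo a b,
      deriv (deriv (deriv (deriv f))) z
          + Q3 (n : ℝ) z * deriv (deriv (deriv f)) z
          + Q2 (n : ℝ) (p : ℝ) ℓ z * deriv (deriv f) z
          + Q1 (n : ℝ) (p : ℝ) ℓ z * deriv f z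
          + Q0 (n : ℝ) (p : ℝ) ℓ z * f z = 0 := by
  set N : ℝ := (n : ℝ) with hNdef
  set P : ℝ := (p : ℝ) with hPdef
  set L : ℝ := ℓ with hLdef
  have key1 : ∀ w ∈ Set.Ioo a b,
      ((0) + (0)*w + (2)*w^2 + (-4)*w^3 + (2)*w^4) * deriv (deriv f) w
      + ((0) + (N)*w + (-3*N)*w^2 + (2*N)*w^3 + (0)*w^4) * deriv f w
      + ((-P) + (-2*L + 2*P + 2*P^2 - 2*N*P)*w + (2*L - 2*P - 2*P^2 + 2*N*P)*w^2 + (0)*w^3 + (0)*w^4) * f w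
      + ((P) + (-2*P)*w + (0)*w^2 + (0)*w^3 + (0)*w^4) * fh w = 0 := by
    intro w hw
    have hw0 : w ≠ 0 := fun h => h0 (h ▸ hw)
    have hw1 : w ≠ 1 := fun h => h1 (h ▸ hw)
    have hw1' : (1:ℝ) - w ≠ 0 := sub_ne_zero.mpr (Ne.symm hw1)
    have h := heq1 w hw
    field_simp at h
    linear_combination h
  have keyE2 : ∀ w ∈ Set.Ioo a b,
      ((0) + (0)*w + (2)*w^2 + (-4)*w^3 + (2)*w^4) * deriv (deriv fh) w
      + ((0) + (N)*w + (-3*N)*w^2 + (2*N)*w^3 + (0)*w^4) * deriv fh w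
      + ((P - N) + (-2*L - 2*P + 2*P^2 + 2*N - 2*N*P)*w + (2*L + 2*P - 2*P^2 - 2*N + 2*N*P)*w^2 + (0)*w^3 + (0)*w^4) * fh w
      + ((N - P) + (2*P - 2*N)*w + (0)*w^2 + (0)*w^3 + (0)*w^4) * f w = 0 := by
    intro w hw
    have hw0 : w ≠ 0 := fun h => h0 (h ▸ hw)
    have hw1 : w ≠ 1 := fun h => h1 (h ▸ hw)
    have hw1' : (1:ℝ) - w ≠ 0 := sub_ne_zero.mpr (Ne.symm hw1)
    have h := heq2 w hw
    field_simp at h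
    linear_combination h
  have key2 : ∀ w ∈ Set.Ioo a b,
      ((0) + (0)*w + (2)*w^2 + (-4)*w^3 + (2)*w^4) * deriv (deriv (deriv f)) w
      + ((0) + (4 + N)*w + (-12 - 3*N)*w^2 + (8 + 2*N)*w^3 + (0)*w^4) * deriv (deriv f) w
      + ((N - P) + (-2*L + 2*P + 2*P^2 - 6*N - 2*N*P)*w + (2*L - 2*P - 2*P^2 + 6*N + 2*N*P)*w^2 + (0)*w^3 + (0)*w^4) * deriv f w
      + ((-2*L + 2*P + 2*P^2 - 2*N*P) + (4*L - 4*P - 4*P^2 + 4*N*P)*w + (0)*w^2 + (0)*w^3 + (0)*w^4) * f w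
      + ((P) + (-2*P)*w + (0)*w^2 + (0)*w^3 + (0)*w^4) * deriv fh w
      + ((-2*P) + (0)*w + (0)*w^2 + (0)*w^3 + (0)*w^4) * fh w = 0 := by
    intro w hw
    have Hd := (((((hdpoly (0) (0) (2) (-4) (2) w).mul (hf3 w hw).hasDerivAt).add ((hdpoly (0) (N) (-3*N) (2*N) (0) w).mul (hf2 w hw).hasDerivAt)).add ((hdpoly (-P) (-2*L + 2*P + 2*P^2 - 2*N*P) (2*L - 2*P - 2*P^2 + 2*N*P) (0) (0) w).mul (hf1 w hw).hasDerivAt)).add ((hdpoly (P) (-2*P) (0) (0) (0) w).mul (hfh1 w hw).hasDerivAt))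
    have Hd0 := Hd.congr_of_eventuallyEq (f₁ := fun _ : ℝ => (0:ℝ)) ?ev
    case ev =>
      filter_upwards [isOpen_Ioo.mem_nhds hw] with y hy
      exact (key1 y hy).symm
    have hV := Hd0.unique (hasDerivAt_const w 0)
    linear_combination hV
  intro z hz
  have hz0 : z ≠ 0 := fun h => h0 (h ▸ hz)
  have hz1 : z ≠ 1 := fun h => h1 (h ▸ hz)
  have hzh : z ≠ 1/2 := fun h => hhalf (h ▸ hz)
  have hz1' : z - 1 ≠ 0 := sub_ne_zero.mpr hz1
  have hz1'' : (1:ℝ) - z ≠ 0 := sub_ne_zero.mpr (Ne.symm hz1)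
  have hzh' : 2*z - 1 ≠ 0 := by
    intro h; exact hzh (by linarith)
  have hzh'' : (1:ℝ) - 2*z ≠ 0 := by
    intro h; exact hzh (by linarith)
  have key3 : ((0) + (0)*z + (2)*z^2 + (-4)*z^3 + (2)*z^4) * deriv (deriv (deriv (deriv f))) z
      + ((0) + (8 + N)*z + (-24 - 3*N)*z^2 + (16 + 2*N)*z^3 + (0)*z^4) * deriv (deriv (deriv f)) z
      + ((4 - P + 2*N) + (-24 - 2*L + 2*P + 2*P^2 - 12*N - 2*N*P)*z + (24 + 2*L - 2*P - 2*P^2 + 12*N + 2*N*P)*z^2 + (0)*z^3 + (0)*z^4) * deriv (deriv f) z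
      + ((-4*L + 4*P + 4*P^2 - 6*N - 4*N*P) + (8*L - 8*P - 8*P^2 + 12*N + 8*N*P)*z + (0)*z^2 + (0)*z^3 + (0)*z^4) * deriv f z
      + ((4*L - 4*P - 4*P^2 + 4*N*P) + (0)*z + (0)*z^2 + (0)*z^3 + (0)*z^4) * f z
      + ((P) + (-2*P)*z + (0)*z^2 + (0)*z^3 + (0)*z^4) * deriv (deriv fh) z
      + ((-4*P) + (0)*z + (0)*z^2 + (0)*z^3 + (0)*z^4) * deriv fh z = 0 := by
    have Hd := (((((((hdpoly (0) (0) (2) (-4) (2) z).mul (hf4 z hz).hasDerivAt).add ((hdpoly (0) (4 + N) (-12 - 3*N) (8 + 2*N) (0) z).mul (hf3 z hz).hasDerivAt)).add ((hdpoly (N - P) (-2*L + 2*P + 2*P^2 - 6*N - 2*N*P) (2*L - 2*P - 2*P^2 + 6*N + 2*N*P) (0) (0) z).mul (hf2 z hz).hasDerivAt)).add ((hdpoly (-2*L + 2*P + 2*P^2 - 2*N*P) (4*L - 4*P - 4*P^2 + 4*N*P) (0) (0) (0) z).mul (hf1 z hz).hasDerivAt)).add ((hdpoly (P) (-2*P)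 (0) (0) (0) z).mul (hfh2 z hz).hasDerivAt)).add ((hdpoly (-2*P) (0) (0) (0) (0) z).mul (hfh1 z hz).hasDerivAt))
    have Hd0 := Hd.congr_of_eventuallyEq (f₁ := fun _ : ℝ => (0:ℝ)) ?ev
    case ev =>
      filter_upwards [isOpen_Ioo.mem_nhds hz] with y hy
      exact (key2 y hy).symm
    have hV := Hd0.unique (hasDerivAt_const z 0)
    linear_combination hV
  have key : z^2*(z - 1)^2 * ((4*z^2*(2*z - 1)^2*(z - 1)^2) * deriv (deriv (deriv (deriv f))) z
        + (4*(N + 4)*z^2*(2*z - 1)^2*(z - 1) + 4*(N + 4)*z*(2*z - 1)^2*(z - 1)^2 - 16*z^2*(2*z - 1)*(z - 1)^2) * deriv (deriv (deriv f)) z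
        + (16 * (N ^ 2 + 2 * (P + 3) * N - 2 * P ^ 2 + 2 * (L + 3)) * z ^ 4
        + 32 * (2 * P ^ 2 - N ^ 2 - 2 * (P + 3) * N - 2 * (L + 3)) * z ^ 3
        + 8 * (3 * N ^ 2 + 5 * (P + 3) * N + 3 * N - 5 * P ^ 2 + L + 4 * (L + 3) + 6) * z ^ 2
        + 8 * (P ^ 2 - N ^ 2 - (P + 3) * N - 3 * N - L - 6) * z
        + N ^ 2 + 6 * N + 8) * deriv (deriv f) z
        + (2*(2*z - 1)) * (2 * P * N ^ 2 + N ^ 2 - 2 * P ^ 2 * N + 4 * P * N + 2 * L * N + 2 * N - 4 * P ^ 2 + 4 * L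
        + 4 * (-(2 * P * N ^ 2) - N ^ 2 + 2 * P ^ 2 * N - 2 * P * N - 2 * L * N - 2 * N
            + 2 * P ^ 2 + 2 * P - 2 * L) * z
        + 4 * (2 * P * N ^ 2 + N ^ 2 - 2 * P ^ 2 * N + 2 * P * N + 2 * L * N + 2 * N
            - 2 * P ^ 2 - 2 * P + 2 * L) * z ^ 2) * deriv f z
        + 4 * (P ^ 4 - 2 * N * P ^ 3 + N ^ 2 * P ^ 2 - 2 * L * P ^ 2 + P ^ 2 - 2 * N * P
          + 2 * N * L * P - 2 * P + L ^ 2 - 2 * L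
        + 4 * (-(P ^ 4) + 2 * N * P ^ 3 - N ^ 2 * P ^ 2 + 2 * L * P ^ 2 + P ^ 2
            - 2 * N * L * P - L ^ 2) * z
        + 4 * (P ^ 4 - 2 * N * P ^ 3 + N ^ 2 * P ^ 2 - 2 * L * P ^ 2 - P ^ 2
            + 2 * N * L * P + L ^ 2) * z ^ 2) * f z) = 0 := by
    linear_combination (1*P + (-1)*N + (-2)*z*L + (-6)*z*P + 2*z*P^2 + 8*z*N + (-2)*z*N*P + 16*z^2 + 10*z^2*L + 14*z^2*P + (-10)*z^2*P^2 + (-24)*z^2*N + 10*z^2*N*P + (-32)*z^3 + (-16)*z^3*L + (-16)*z^3*P + 16*z^3*P^2 + 32*z^3*N + (-16)*z^3*N*P + 16*z^4 + 8*z^4*L + 8*z^4*P + (-8)*z^4*P^2 + (-16)*z^4*N + 8*z^4*N*P) * key1 z hz + (1*z*N + 8*z^2 + (-7)*z^2*N + (-32)*z^3 + 18*z^3*N + 40*z^4 + (-20)*z^4*N + (-16)*z^5 + 8*z^5*N) * key2 z hz + (2*z^2 + (-12)*z^3 + 26*z^4 + (-24)*z^5 + 8*z^6) * key3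
      + ((-1)*P + 6*z*P + (-12)*z^2*P + 8*z^3*P) * keyE2 z hz
  have hfac : z^2*(z - 1)^2 ≠ 0 := mul_ne_zero (pow_ne_zero 2 hz0) (pow_ne_zero 2 hz1')
  have TZ := (mul_eq_zero.mp key).resolve_left hfac
  have d3 : (16:ℝ) * z ^ 6 - 48 * z ^ 5 + 52 * z ^ 4 - 24 * z ^ 3 + 4 * z ^ 2 ≠ 0 := by
    have e : (16:ℝ) * z ^ 6 - 48 * z ^ 5 + 52 * z ^ 4 - 24 * z ^ 3 + 4 * z ^ 2
        = 4 * z^2 * (2*z - 1)^2 * (z - 1)^2 := by ring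
    rw [e]
    exact mul_ne_zero (mul_ne_zero (mul_ne_zero (by norm_num) (pow_ne_zero 2 hz0)) (pow_ne_zero 2 hzh')) (pow_ne_zero 2 hz1')
  have d2 : (4:ℝ) * z ^ 5 - 10 * z ^ 4 + 8 * z ^ 3 - 2 * z ^ 2 ≠ 0 := by
    have e : (4:ℝ) * z ^ 5 - 10 * z ^ 4 + 8 * z ^ 3 - 2 * z ^ 2
        = 2 * z^2 * (2*z - 1) * (z - 1)^2 := by ring
    rw [e]
    exact mul_ne_zero (mul_ne_zero (mul_ne_zero (by norm_num) (pow_ne_zero 2 hz0)) hzh') (pow_ne_zero 2 hz1')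
  have d1 : (4:ℝ) * z ^ 6 - 12 * z ^ 5 + 13 * z ^ 4 - 6 * z ^ 3 + z ^ 2 ≠ 0 := by
    have e : (4:ℝ) * z ^ 6 - 12 * z ^ 5 + 13 * z ^ 4 - 6 * z ^ 3 + z ^ 2
        = z^2 * (2*z - 1)^2 * (z - 1)^2 := by ring
    rw [e]
    exact mul_ne_zero (mul_ne_zero (pow_ne_zero 2 hz0) (pow_ne_zero 2 hzh')) (pow_ne_zero 2 hz1')
  have hDcom : (4:ℝ)*z^2*(2*z - 1)^2*(z - 1)^2 ≠ 0 :=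
    mul_ne_zero (mul_ne_zero (mul_ne_zero (by norm_num) (pow_ne_zero 2 hz0)) (pow_ne_zero 2 hzh')) (pow_ne_zero 2 hz1')
  have q3 : (4:ℝ)*z^2*(2*z - 1)^2*(z - 1)^2 * Q3 N z = (4*(N + 4)*z^2*(2*z - 1)^2*(z - 1) + 4*(N + 4)*z*(2*z - 1)^2*(z - 1)^2 - 16*z^2*(2*z - 1)*(z - 1)^2) := by
    rw [Q3]
    rw [div_add_div _ _ hz1' hz0, div_add_div _ _ (mul_ne_zero hz1' hz0) hzh'', ← mul_div_assoc, div_eq_iff (mul_ne_zero (mul_ne_zero hz1' hz0) hzh'')]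
    ring
  have q2 : (4:ℝ)*z^2*(2*z - 1)^2*(z - 1)^2 * Q2 N P L z
      = (16 * (N ^ 2 + 2 * (P + 3) * N - 2 * P ^ 2 + 2 * (L + 3)) * z ^ 4
        + 32 * (2 * P ^ 2 - N ^ 2 - 2 * (P + 3) * N - 2 * (L + 3)) * z ^ 3
        + 8 * (3 * N ^ 2 + 5 * (P + 3) * N + 3 * N - 5 * P ^ 2 + L + 4 * (L + 3) + 6) * z ^ 2
        + 8 * (P ^ 2 - N ^ 2 - (P + 3) * N - 3 * N - L - 6) * z
        + N ^ 2 + 6 * N + 8) := by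
    rw [Q2, ← mul_div_assoc, div_eq_iff d3]
    ring
  have q1 : (4:ℝ)*z^2*(2*z - 1)^2*(z - 1)^2 * Q1 N P L z
      = (2*(2*z - 1)) * (2 * P * N ^ 2 + N ^ 2 - 2 * P ^ 2 * N + 4 * P * N + 2 * L * N + 2 * N - 4 * P ^ 2 + 4 * L
        + 4 * (-(2 * P * N ^ 2) - N ^ 2 + 2 * P ^ 2 * N - 2 * P * N - 2 * L * N - 2 * N
            + 2 * P ^ 2 + 2 * P - 2 * L) * z
        + 4 * (2 * P * N ^ 2 + N ^ 2 - 2 * P ^ 2 * N + 2 * P * N + 2 * L * N + 2 * N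
            - 2 * P ^ 2 - 2 * P + 2 * L) * z ^ 2) := by
    rw [Q1, ← mul_div_assoc, div_eq_iff d2]
    ring
  have q0 : (4:ℝ)*z^2*(2*z - 1)^2*(z - 1)^2 * Q0 N P L z
      = 4 * (P ^ 4 - 2 * N * P ^ 3 + N ^ 2 * P ^ 2 - 2 * L * P ^ 2 + P ^ 2 - 2 * N * P
          + 2 * N * L * P - 2 * P + L ^ 2 - 2 * L
        + 4 * (-(P ^ 4) + 2 * N * P ^ 3 - N ^ 2 * P ^ 2 + 2 * L * P ^ 2 + P ^ 2
            - 2 * N * L * P - L ^ 2) * z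
        + 4 * (P ^ 4 - 2 * N * P ^ 3 + N ^ 2 * P ^ 2 - 2 * L * P ^ 2 - P ^ 2
            + 2 * N * L * P + L ^ 2) * z ^ 2) := by
    rw [Q0, ← mul_div_assoc, div_eq_iff d1]
    ring
  refine (mul_eq_zero.mp ?_).resolve_left hDcom
  linear_combination TZ + deriv (deriv (deriv f)) z * q3 + deriv (deriv f) z * q2
    + deriv f z * q1 + f z * q0
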